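/- Let 𝔽_q be a finite field with q odd, and let ε ∈ 𝔽_q^× be a non-square. Then the affine curve E given by ε y² = (ε²/4) x⁴ + 1 with x, y ∈ 𝔽_q^× has an 𝔽_q-rational point. -/

import Mathlib

open Finset

section Aux

variable {K : Type*} [Field K] [Fintype K] [DecidableEq K]

/-- Sum of the quadratic character over `t * (t+1)` is `-1`. -/
lemma aux_sum_mul_succ (hF : ringChar K ≠ 2) :
    ∑ t : K, quadraticChar K (t * (t + 1)) = -1 := by
  have h0 : ∑ t : K, quadraticChar K (t * (t + 1)) =
      ∑ t ∈ univ.erase (0 : K), quadraticChar K (t * (t + 1)) := by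
    rw [← Finset.sum_erase_add univ _ (mem_univ (0 : K))]
    simp
  have h1 : ∑ t ∈ univ.erase (0 : K), quadraticChar K (t * (t + 1)) =
      ∑ s ∈ univ.erase (1 : K), quadraticChar K s := by
    refine Finset.sum_nbij' (fun t => 1 + t⁻¹) (fun s => (s - 1)⁻¹) ?_ ?_ ?_ ?_ ?_
    · intro t ht
      simp only [mem_erase, mem_univ, and_true] at ht ⊢
      intro h
      apply ht
      have : t⁻¹ = 0 := by linear_combination h
      simpa using this
    · intro s hs
      simp only [mem_erase, mem_univ, and_true] at hs ⊢
      exact inv_ne_zero (sub_ne_zero.mpr hs)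
    · intro t ht
      simp only [mem_erase, mem_univ, and_true] at ht
      field_simp
      ring
    · intro s hs
      simp only [mem_erase, mem_univ, and_true] at hs
      have : s - 1 ≠ 0 := sub_ne_zero.mpr hs
      field_simp
      ring
    · intro t ht
      simp only [mem_erase, mem_univ, and_true] at ht
      have : t * (t + 1) = t ^ 2 * (1 + t⁻¹) := by field_simp
      rw [this, map_mul, quadraticChar_sq_one' ht, one_mul]
  have h2 : ∑ s ∈ univ.erase (1 : K), quadraticChar K s = -1 := by
    have := quadraticChar_sum_zero (F := K) hF
    have h3 := Finset.sum_erase_add univ (quadraticChar K) (mem_univ (1 : K))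
    rw [this] at h3
    simpa using h3
  rw [h0, h1, h2]

/-- Sum of the quadratic character over `w^2 + 1` is `-1`. -/
lemma aux_sum_sq_add_one (hF : ringChar K ≠ 2) :
    ∑ w : K, quadraticChar K (w ^ 2 + 1) = -1 := by
  have hcomp := Finset.sum_comp (s := (univ : Finset K)) (fun b : K => quadraticChar K (b + 1)) (fun w : K => w ^ 2)
  rw [hcomp]
  have hcard : ∀ b : K, ((#{a : K | a ^ 2 = b} : ℤ)) = quadraticChar K b + 1 := by
    intro b
    have h := quadraticChar_card_sqrts (F := K) hF b
    rwa [Set.toFinset_setOf] at h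
  have hstep : ∀ b ∈ univ.image (fun w : K => w ^ 2),
      (#{a ∈ univ | a ^ 2 = b}) • quadraticChar K (b + 1)
        = (quadraticChar K b + 1) * quadraticChar K (b + 1) := by
    intro b _
    rw [nsmul_eq_mul, hcard b]
  rw [Finset.sum_congr rfl hstep]
  have hext : ∑ b ∈ univ.image (fun w : K => w ^ 2),
      (quadraticChar K b + 1) * quadraticChar K (b + 1)
      = ∑ b : K, (quadraticChar K b + 1) * quadraticChar K (b + 1) := by
    apply Finset.sum_subset (subset_univ _)
    intro b _ hb
    have hbns : ¬ IsSquare b := by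
      intro ⟨r, hr⟩
      exact hb (Finset.mem_image.mpr ⟨r, mem_univ r, by rw [hr]; ring⟩)
    rw [quadraticChar_neg_one_iff_not_isSquare.mpr hbns]
    ring
  rw [hext]
  have hsplit : ∀ b : K, (quadraticChar K b + 1) * quadraticChar K (b + 1)
      = quadraticChar K (b * (b + 1)) + quadraticChar K (b + 1) := by
    intro b; rw [map_mul]; ring
  rw [Finset.sum_congr rfl (fun b _ => hsplit b), Finset.sum_add_distrib,
    aux_sum_mul_succ hF]
  have hshift : ∑ b : K, quadraticChar K (b + 1) = ∑ c : K, quadraticChar K c :=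
    Fintype.sum_bijective (· + 1) (add_left_injective 1).bijective_of_finite _ _ (fun _ => rfl)
  rw [hshift, quadraticChar_sum_zero hF]
  ring

lemma aux_exists_i (hF : ringChar K ≠ 2) {σ : ℤ} (hσ : σ = 1 ∨ σ = -1)
    (H : ∀ w : K, quadraticChar K w = σ → quadraticChar K (w ^ 2 + 1) ≠ -1) :
    ∃ i : K, i ^ 2 = -1 ∧ quadraticChar K i = σ := by
  by_contra hni
  push_neg at hni
  set χ := quadraticChar K with hχ
  have hσ0 : σ ≠ 0 := by rcases hσ with h | h <;> simp [h]
  have hχlb : ∀ x : K, (-1 : ℤ) ≤ χ x := by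
    intro x
    rcases eq_or_ne x 0 with h | h
    · simp [hχ, h]
    · rcases quadraticChar_dichotomy (F := K) h with h1 | h1 <;> rw [hχ, h1] <;> norm_num
  set s1 : Finset K := univ.filter (fun w => χ w = σ) with hs1
  set s2 : Finset K := (univ.filter (fun w => ¬ χ w = σ)).filter (fun w => χ w = -σ) with hs2
  set s3 : Finset K := (univ.filter (fun w => ¬ χ w = σ)).filter (fun w => ¬ χ w = -σ) with hs3
  have hsplit : ∀ f : K → ℤ, ∑ w : K, f w =
      ∑ w ∈ s1, f w + (∑ w ∈ s2, f w + ∑ w ∈ s3, f w) := by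
    intro f
    rw [← Finset.sum_filter_add_sum_filter_not univ (fun w => χ w = σ) f]
    congr 1
    rw [← Finset.sum_filter_add_sum_filter_not (univ.filter (fun w => ¬ χ w = σ))
      (fun w => χ w = -σ) f]
  -- s3 = {0}
  have hs30 : s3 = {0} := by
    ext w
    simp only [hs3, mem_filter, mem_univ, true_and, mem_singleton]
    constructor
    · rintro ⟨h1, h2⟩
      by_contra hw
      rcases quadraticChar_dichotomy (F := K) hw with hd | hd <;>
        rcases hσ with he | he <;> rw [he] at h1 h2 <;> rw [hχ] at h1 h2 <;> omega
    · rintro rfl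
      constructor <;> rw [hχ, quadraticChar_zero] <;> omega
  -- the three pieces for f = fun w => χ (w^2+1)
  have hA : ∑ w ∈ s1, χ (w ^ 2 + 1) = (#s1 : ℤ) := by
    have h1 : ∀ w ∈ s1, χ (w ^ 2 + 1) = 1 := by
      intro w hw
      rw [hs1, mem_filter] at hw
      have hwσ : χ w = σ := hw.2
      have hne : w ^ 2 + 1 ≠ 0 := by
        intro h0
        exact hni w (by linear_combination h0) hwσ
      rcases quadraticChar_dichotomy (F := K) hne with hd | hd
      · exact hd
      · exact absurd hd (H w hwσ)
    rw [Finset.sum_congr rfl h1, Finset.sum_const, nsmul_eq_mul, mul_one]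
  have hB1 : -(#s2 : ℤ) ≤ ∑ w ∈ s2, χ (w ^ 2 + 1) := by
    have := Finset.card_nsmul_le_sum s2 (fun w => χ (w ^ 2 + 1)) (-1)
      (fun x _ => hχlb _)
    simpa using this
  have hB2 : ∑ w ∈ s3, χ (w ^ 2 + 1) = 1 := by
    rw [hs30, Finset.sum_singleton]
    norm_num [hχ]
  -- cardinalities are equal
  have hc1 : ∑ w ∈ s1, χ w = (#s1 : ℤ) * σ := by
    have e1 : ∑ w ∈ s1, χ w = ∑ _w ∈ s1, σ := Finset.sum_congr rfl (fun w hw => by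
      rw [hs1, mem_filter] at hw; exact hw.2)
    rw [Finset.sum_const, nsmul_eq_mul] at e1
    exact e1
  have hc2 : ∑ w ∈ s2, χ w = (#s2 : ℤ) * (-σ) := by
    have e2 : ∑ w ∈ s2, χ w = ∑ _w ∈ s2, (-σ) := Finset.sum_congr rfl (fun w hw => by
      rw [hs2, mem_filter] at hw; exact hw.2)
    rw [Finset.sum_const, nsmul_eq_mul] at e2
    exact e2
  have hc3 : ∑ w ∈ s3, χ w = 0 := by
    rw [hs30, Finset.sum_singleton, hχ, quadraticChar_zero]
  have hzero := quadraticChar_sum_zero (F := K) hF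
  rw [hsplit χ, hc1, hc2, hc3] at hzero
  have hcards : (#s1 : ℤ) = (#s2 : ℤ) := by
    have : ((#s1 : ℤ) - #s2) * σ = 0 := by linarith
    rcases mul_eq_zero.mp this with h | h
    · linarith
    · exact absurd h hσ0
  have hsum := aux_sum_sq_add_one (K := K) hF
  rw [hsplit (fun w => χ (w ^ 2 + 1)), hA, hB2] at hsum
  -- -1 = #s1 + (B1 + 1) ≥ #s1 - #s2 + 1 = 1, contradiction
  linarith


end Aux


/-- Let `𝔽_q` be a finite field with `q` odd, and let `ε ∈ 𝔽_qˣ` be a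
non-square.  Then the affine curve `E : ε y² = (ε²/4) x⁴ + 1` with `x, y ∈ 𝔽_qˣ` has an
`𝔽_q`-rational point. -/
theorem stmt8 {K : Type*} [Field K] [Fintype K] (hq : Odd (Fintype.card K))
    (ε : K) (hε : ε ≠ 0) (hns : ¬IsSquare ε) :
    ∃ x y : K, x ≠ 0 ∧ y ≠ 0 ∧ ε * y ^ 2 = ε ^ 2 / 4 * x ^ 4 + 1 := by
  classical
  have hF : ringChar K ≠ 2 := by
    intro h
    have h2 := FiniteField.even_card_of_char_two h
    rw [Nat.odd_iff] at hq
    omega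
  have h2 : (2 : K) ≠ 0 := Ring.two_ne_zero hF
  set χ := quadraticChar K with hχdef
  have hχε : χ ε = -1 := quadraticChar_neg_one_iff_not_isSquare.mpr hns
  have h2dich : χ 2 = 1 ∨ χ 2 = -1 := quadraticChar_dichotomy h2
  have hχsq2 : χ 2 * χ 2 = 1 := by rcases h2dich with h | h <;> rw [h] <;> norm_num
  have hσ : -χ 2 = 1 ∨ -χ 2 = -1 := by rcases h2dich with h | h <;> [right; left] <;>
    rw [h] <;> norm_num
  -- key existence
  have hkey : ∃ w : K, χ w = -χ 2 ∧ χ (w ^ 2 + 1) = -1 := by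
    by_contra hno
    push_neg at hno
    obtain ⟨i, hi2, hiσ⟩ := aux_exists_i hF hσ (fun w hw => hno w hw)
    have h1i : (1 : K) + i ≠ 0 := by
      intro h0
      have : i = -1 := by linear_combination h0
      rw [this] at hi2
      have : (2 : K) = 0 := by linear_combination hi2
      exact h2 this
    have hsq : ((1 : K) + i) ^ 2 = 2 * i := by linear_combination hi2
    have hone : χ (2 * i) = 1 := by
      rw [← hsq]; exact quadraticChar_sq_one' h1i
    rw [map_mul, hiσ] at hone
    rcases h2dich with h | h <;> rw [h] at hone <;> norm_num at hone
  obtain ⟨w, hw1, hw2⟩ := hkey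
  have hw0 : w ≠ 0 := by
    intro h0
    rw [h0, hχdef, quadraticChar_zero] at hw1
    rcases h2dich with h | h <;> rw [h] at hw1 <;> norm_num at hw1
  have hχinv : χ ε⁻¹ = -1 := by
    have : χ ε⁻¹ * χ ε = 1 := by
      rw [← map_mul, inv_mul_cancel₀ hε, map_one]
    rw [hχε] at this
    linarith
  -- x
  have ha : χ (2 * w * ε⁻¹) = 1 := by
    rw [map_mul, map_mul, hw1, hχinv]
    rcases h2dich with h | h <;> rw [h] <;> norm_num
  have ha0 : (2 * w * ε⁻¹) ≠ 0 := by
    intro h0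
    rw [h0, hχdef, quadraticChar_zero] at ha
    omega
  obtain ⟨x, hx⟩ := (quadraticChar_one_iff_isSquare ha0).mp ha
  have hx0 : x ≠ 0 := by
    intro h0
    rw [h0, mul_zero] at hx
    exact ha0 hx
  -- y
  have hb : χ ((w ^ 2 + 1) * ε⁻¹) = 1 := by
    rw [map_mul, hw2, hχinv]
    norm_num
  have hb0 : (w ^ 2 + 1) * ε⁻¹ ≠ 0 := by
    intro h0
    rw [h0, hχdef, quadraticChar_zero] at hb
    omega
  obtain ⟨y, hy⟩ := (quadraticChar_one_iff_isSquare hb0).mp hb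
  have hy0 : y ≠ 0 := by
    intro h0
    rw [h0, mul_zero] at hy
    exact hb0 hy
  refine ⟨x, y, hx0, hy0, ?_⟩
  have h4 : (4 : K) ≠ 0 := by
    intro h0
    have : (2 : K) * 2 = 0 := by linear_combination h0
    rcases mul_eq_zero.mp this with h | h <;> exact h2 h
  have hx' : ε * (x * x) = 2 * w := by
    rw [← hx]
    field_simp
  have hy' : ε * (y * y) = w ^ 2 + 1 := by
    rw [← hy]
    field_simp
  field_simp
  linear_combination (4 : K) * hy' - (ε * x * x + 2 * w) * hx'
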